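/- For z > 0 and real y: (1/√π) ∫_0^∞ z^{−1/2} e^{−x²/z − z} dz = e^{−2|x|} for every real x; consequently ∫_0^∞ ∫_{−∞}^y (1/√(πz)) e^{−x²/z} dx · e^{−z} dz = ∫_{−∞}^y e^{−2|x|} dx. -/

import Mathlib

open Real MeasureTheory

open Set

lemma exp_neg_sq_integrable : Integrable (fun u : ℝ => Real.exp (-u ^ 2)) := by
  have := integrable_exp_neg_mul_sq (b := 1) one_pos
  simpa using this

lemma glasser (c : ℝ) (hc : 0 ≤ c) :
    ∫ t in Ioi (0:ℝ), Real.exp (-(t - c / t) ^ 2) = Real.sqrt π / 2 := by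
  rcases eq_or_lt_of_le hc with rfl | hc
  · simp only [zero_div, sub_zero]
    have := integral_gaussian_Ioi 1
    simpa using this
  · set g : ℝ → ℝ := fun t => t - c / t with hg
    -- derivative of g
    have hg' : ∀ t ∈ Ioi (0:ℝ), HasDerivWithinAt g (1 + c / t ^ 2) (Ioi 0) t := by
      intro t ht
      have ht0 : t ≠ 0 := ne_of_gt ht
      have h1 : HasDerivAt (fun t : ℝ => t - c / t) (1 + c / t ^ 2) t := by
        have h2 : HasDerivAt (fun t : ℝ => c / t) (c * (-(t ^ 2)⁻¹)) t := by
          simpa [div_eq_mul_inv] using (hasDerivAt_inv ht0).const_mul c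
        exact ((hasDerivAt_id' t).sub h2).congr_deriv (by ring)
      exact h1.hasDerivWithinAt
    -- injectivity of g on Ioi 0
    have hginj : InjOn g (Ioi (0:ℝ)) := by
      intro a ha b hb hab
      simp only [hg, mem_Ioi] at ha hb hab ⊢
      have h : (a - b) * (a * b + c) = 0 := by
        field_simp at hab
        nlinarith [hab]
      have : a * b + c > 0 := by positivity
      have := mul_eq_zero.mp h
      rcases this with h' | h'
      · linarith
      · linarith
    -- image of g is univ
    have hgim : g '' Ioi (0:ℝ) = univ := by
      apply eq_univ_of_forall
      intro u
      refine ⟨(u + Real.sqrt (u ^ 2 + 4 * c)) / 2, ?_, ?_⟩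
      · have hs : Real.sqrt (u ^ 2 + 4 * c) > |u| := by
          rw [← Real.sqrt_sq_eq_abs]
          apply Real.sqrt_lt_sqrt (sq_nonneg u)
          linarith
        have := abs_le.mp (le_of_lt hs) -- wrong direction; use neg_abs
        have h1 : -|u| ≤ u := neg_abs_le u
        simp only [mem_Ioi]
        nlinarith [hs, h1]
      · set s := Real.sqrt (u ^ 2 + 4 * c) with hs
        have hs2 : s ^ 2 = u ^ 2 + 4 * c := Real.sq_sqrt (by positivity)
        have hspos : 0 < (u + s) / 2 := by
          have hsgt : s > |u| := by
            rw [hs, ← Real.sqrt_sq_eq_abs]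
            apply Real.sqrt_lt_sqrt (sq_nonneg u); linarith
          have := neg_abs_le u
          nlinarith
        simp only [hg]
        have hne : u + s ≠ 0 := by intro h; rw [h] at hspos; simp at hspos
        field_simp [hne]
        nlinarith [hs2]
    -- inversion substitution: f t = c / t
    set f : ℝ → ℝ := fun t => c / t with hf
    have hf' : ∀ t ∈ Ioi (0:ℝ), HasDerivWithinAt f (-(c / t ^ 2)) (Ioi 0) t := by
      intro t ht
      have ht0 : t ≠ 0 := ne_of_gt ht
      have h2 : HasDerivAt (fun t : ℝ => c / t) (c * (-(t ^ 2)⁻¹)) t := by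
        simpa [div_eq_mul_inv] using (hasDerivAt_inv ht0).const_mul c
      have : c * (-(t ^ 2)⁻¹) = -(c / t ^ 2) := by field_simp
      exact (this ▸ h2).hasDerivWithinAt
    have hfinj : InjOn f (Ioi (0:ℝ)) := by
      intro a ha b hb hab
      simp only [hf, mem_Ioi] at ha hb hab
      field_simp at hab
      rcases hab with h | h
      · rfl
    have hfim : f '' Ioi (0:ℝ) = Ioi (0:ℝ) := by
      apply Subset.antisymm
      · rintro _ ⟨t, ht, rfl⟩
        simp only [hf, mem_Ioi] at ht ⊢
        positivity
      · intro u hu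
        simp only [mem_Ioi] at hu
        exact ⟨c / u, by simp only [mem_Ioi]; positivity, by
          simp only [hf]; field_simp⟩
    have key1 : ∫ t in Ioi (0:ℝ), Real.exp (-(g t) ^ 2)
        = ∫ t in Ioi (0:ℝ), (c / t ^ 2) * Real.exp (-(g t) ^ 2) := by
      conv_lhs => rw [← hfim]
      rw [integral_image_eq_integral_abs_deriv_smul measurableSet_Ioi hf' hfinj]
      apply setIntegral_congr_fun measurableSet_Ioi
      intro t ht
      simp only [mem_Ioi] at ht
      have ht0 : t ≠ 0 := ne_of_gt ht
      have h1 : |(-(c / t ^ 2))| = c / t ^ 2 := by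
        rw [abs_neg, abs_of_pos (by positivity)]
      have h2 : g (f t) = - g t := by
        simp only [hg, hf]
        field_simp
        ring
      simp only [smul_eq_mul]
      rw [h1, h2]
      ring_nf
    have key2 : ∫ u : ℝ, Real.exp (-u ^ 2)
        = ∫ t in Ioi (0:ℝ), (1 + c / t ^ 2) * Real.exp (-(g t) ^ 2) := by
      rw [← setIntegral_univ, ← hgim,
        integral_image_eq_integral_abs_deriv_smul measurableSet_Ioi hg' hginj]
      apply setIntegral_congr_fun measurableSet_Ioi
      intro t ht
      simp only [mem_Ioi] at ht
      simp only [smul_eq_mul]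
      rw [abs_of_pos (by positivity)]
    have hginteg : IntegrableOn (fun t => (1 + c / t ^ 2) * Real.exp (-(g t) ^ 2))
        (Ioi (0:ℝ)) := by
      have := (integrableOn_image_iff_integrableOn_abs_deriv_smul measurableSet_Ioi hg'
        hginj (fun u => Real.exp (-u ^ 2))).mp (by rw [hgim]; exact exp_neg_sq_integrable.integrableOn)
      apply this.congr_fun _ measurableSet_Ioi
      intro t ht
      simp only [mem_Ioi] at ht
      simp only [smul_eq_mul]
      rw [abs_of_pos (by positivity)]
    have hbound : ∀ t ∈ Ioi (0:ℝ), Real.exp (-(g t) ^ 2) ≤ (1 + c / t ^ 2) * Real.exp (-(g t) ^ 2) := by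
      intro t ht
      simp only [mem_Ioi] at ht
      nlinarith [Real.exp_pos (-(g t) ^ 2), div_nonneg hc.le (sq_nonneg t)]
    have hmeas1 : AEStronglyMeasurable (fun t : ℝ => Real.exp (-(g t) ^ 2))
        (volume.restrict (Ioi 0)) := by
      apply Measurable.aestronglyMeasurable
      fun_prop
    have hint1 : IntegrableOn (fun t => Real.exp (-(g t) ^ 2)) (Ioi (0:ℝ)) := by
      apply hginteg.mono' hmeas1
      filter_upwards [ae_restrict_mem measurableSet_Ioi] with t ht
      rw [Real.norm_eq_abs, abs_of_pos (Real.exp_pos _)]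
      exact hbound t ht
    have hint2 : IntegrableOn (fun t => (c / t ^ 2) * Real.exp (-(g t) ^ 2)) (Ioi (0:ℝ)) := by
      apply hginteg.mono' (by apply Measurable.aestronglyMeasurable; fun_prop)
      filter_upwards [ae_restrict_mem measurableSet_Ioi] with t ht
      simp only [mem_Ioi] at ht
      rw [Real.norm_eq_abs, abs_of_nonneg (by positivity)]
      nlinarith [Real.exp_pos (-(g t) ^ 2), div_nonneg hc.le (sq_nonneg t)]
    have split : ∫ t in Ioi (0:ℝ), (1 + c / t ^ 2) * Real.exp (-(g t) ^ 2)
        = (∫ t in Ioi (0:ℝ), Real.exp (-(g t) ^ 2))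
          + ∫ t in Ioi (0:ℝ), (c / t ^ 2) * Real.exp (-(g t) ^ 2) := by
      rw [← integral_add hint1 hint2]
      apply setIntegral_congr_fun measurableSet_Ioi
      intro t ht
      ring
    have hgauss : ∫ u : ℝ, Real.exp (-u ^ 2) = Real.sqrt π := by
      have := integral_gaussian 1
      simpa using this
    have : Real.sqrt π = (∫ t in Ioi (0:ℝ), Real.exp (-(g t) ^ 2))
        + ∫ t in Ioi (0:ℝ), Real.exp (-(g t) ^ 2) := by
      rw [← hgauss, key2, split, ← key1]
    simp only [hg] at this ⊢
    linarith

lemma mixture (a : ℝ) (ha : 0 ≤ a) :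
    ∫ z in Ioi (0:ℝ), z ^ (-(1:ℝ)/2) * Real.exp (-a / z - z)
      = Real.sqrt π * Real.exp (-2 * Real.sqrt a) := by
  have hfim : (fun t : ℝ => t ^ 2) '' Ioi (0:ℝ) = Ioi (0:ℝ) := by
    apply Subset.antisymm
    · rintro _ ⟨t, ht, rfl⟩
      simp only [mem_Ioi] at ht ⊢
      positivity
    · intro u hu
      simp only [mem_Ioi] at hu
      exact ⟨Real.sqrt u, by simp only [mem_Ioi]; positivity, Real.sq_sqrt hu.le⟩
  have hf' : ∀ t ∈ Ioi (0:ℝ), HasDerivWithinAt (fun t : ℝ => t ^ 2) (2 * t) (Ioi 0) t := by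
    intro t ht
    simpa using ((hasDerivAt_pow 2 t).hasDerivWithinAt (s := Ioi 0))
  have hfinj : InjOn (fun t : ℝ => t ^ 2) (Ioi (0:ℝ)) := by
    intro x hx y hy h
    simp only [mem_Ioi] at hx hy
    have h' : x ^ 2 = y ^ 2 := h
    nlinarith
  conv_lhs => rw [← hfim]
  rw [integral_image_eq_integral_abs_deriv_smul measurableSet_Ioi hf' hfinj]
  have congrstep : ∀ t ∈ Ioi (0:ℝ),
      |2 * t| • ((t ^ 2) ^ (-(1:ℝ)/2) * Real.exp (-a / t ^ 2 - t ^ 2))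
        = (2 * Real.exp (-2 * Real.sqrt a)) * Real.exp (-(t - Real.sqrt a / t) ^ 2) := by
    intro t ht
    simp only [mem_Ioi] at ht
    have h1 : ((t ^ 2 : ℝ)) ^ (-(1:ℝ)/2) = t⁻¹ := by
      rw [← Real.rpow_natCast t 2, ← Real.rpow_mul ht.le]
      norm_num
      exact Real.rpow_neg_one t
    have h2 : -a / t ^ 2 - t ^ 2 = -(t - Real.sqrt a / t) ^ 2 + (-2 * Real.sqrt a) := by
      have hs : Real.sqrt a ^ 2 = a := Real.sq_sqrt ha
      field_simp
      ring_nf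
      nlinarith [hs]
    rw [smul_eq_mul, h1, h2, Real.exp_add, abs_of_pos (by positivity)]
    field_simp
  rw [setIntegral_congr_fun measurableSet_Ioi congrstep, integral_const_mul,
    glasser _ (Real.sqrt_nonneg a)]
  ring

lemma part1 (x : ℝ) :
    (1 / Real.sqrt π) *
        ∫ z in Ioi (0 : ℝ), z ^ (-(1 : ℝ) / 2) * Real.exp (-x ^ 2 / z - z)
      = Real.exp (-2 * |x|) := by
  rw [mixture (x ^ 2) (sq_nonneg x), Real.sqrt_sq_eq_abs]
  have h : Real.sqrt π ≠ 0 := by positivity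
  field_simp

lemma part2 (y : ℝ) :
    ∫ z in Ioi (0 : ℝ),
        (∫ x in Iic y, (1 / Real.sqrt (π * z)) * Real.exp (-x ^ 2 / z)) *
          Real.exp (-z)
      = ∫ x in Iic y, Real.exp (-2 * |x|) := by
  set F : ℝ → ℝ → ℝ := fun z x =>
    (1 / Real.sqrt π) * (z ^ (-(1:ℝ)/2) * Real.exp (-x ^ 2 / z - z)) with hF
  have hFval : ∀ z > (0:ℝ), ∀ x : ℝ,
      (1 / Real.sqrt (π * z)) * Real.exp (-x ^ 2 / z) * Real.exp (-z) = F z x := by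
    intro z hz x
    have h1 : Real.sqrt (π * z) = Real.sqrt π * Real.sqrt z := Real.sqrt_mul pi_pos.le z
    have h2 : z ^ (-(1:ℝ)/2) = (Real.sqrt z)⁻¹ := by
      rw [Real.sqrt_eq_rpow, ← Real.rpow_neg hz.le]
      norm_num
    simp only [hF]
    rw [h1, h2]
    have h3 : Real.exp (-x ^ 2 / z - z) = Real.exp (-x ^ 2 / z) * Real.exp (-z) := by
      rw [← Real.exp_add]; ring_nf
    rw [h3]
    have hs : Real.sqrt π ≠ 0 := by positivity
    have hsz : Real.sqrt z ≠ 0 := by positivity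
    field_simp
  have hmeasF : AEStronglyMeasurable (Function.uncurry F)
      ((volume.restrict (Ioi (0:ℝ))).prod (volume.restrict (Iic y))) := by
    apply Measurable.aestronglyMeasurable
    simp only [hF, Function.uncurry]
    fun_prop
  have hIntF : Integrable (Function.uncurry F)
      ((volume.restrict (Ioi (0:ℝ))).prod (volume.restrict (Iic y))) := by
    rw [integrable_prod_iff hmeasF]
    constructor
    · filter_upwards [ae_restrict_mem measurableSet_Ioi] with z hz
      simp only [mem_Ioi] at hz
      have h0 : Integrable (fun x : ℝ => Real.exp (-(1/z) * x ^ 2)) :=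
        integrable_exp_neg_mul_sq (by positivity)
      have h1 := (h0.integrableOn (s := Iic y)).const_mul
        ((1 / Real.sqrt π) * (z ^ (-(1:ℝ)/2) * Real.exp (-z)))
      apply h1.congr
      filter_upwards with x
      simp only [Function.uncurry_apply_pair, hF]
      have e1 : -x ^ 2 / z - z = (-(1/z) * x ^ 2) + (-z) := by ring
      rw [e1, Real.exp_add]
      ring
    · apply Integrable.mono' (g := fun z : ℝ => Real.exp (-z))
      · have := exp_neg_integrableOn_Ioi (0:ℝ) (b := 1) one_pos
        simpa [IntegrableOn] using this
      · exact hmeasF.norm.integral_prod_right'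
      · filter_upwards [ae_restrict_mem measurableSet_Ioi] with z hz
        simp only [mem_Ioi] at hz
        have hFnn : ∀ x : ℝ, 0 ≤ F z x := by
          intro x
          simp only [hF]
          positivity
        have hIntz : Integrable (fun x : ℝ => F z x) := by
          have h0 : Integrable (fun x : ℝ => Real.exp (-(1/z) * x ^ 2)) :=
            integrable_exp_neg_mul_sq (by positivity)
          have h1 := h0.const_mul ((1 / Real.sqrt π) * (z ^ (-(1:ℝ)/2) * Real.exp (-z)))
          apply h1.congr
          filter_upwards with x
          simp only [hF]
          have e1 : -x ^ 2 / z - z = (-(1/z) * x ^ 2) + (-z) := by ring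
          rw [e1, Real.exp_add]
          ring
        have hval : ∫ x : ℝ, F z x = Real.exp (-z) := by
          have e2 : (fun x : ℝ => F z x)
              = fun x : ℝ => ((1 / Real.sqrt π) * (z ^ (-(1:ℝ)/2) * Real.exp (-z)))
                * Real.exp (-(1/z) * x ^ 2) := by
            funext x
            simp only [hF]
            have e1 : -x ^ 2 / z - z = (-(1/z) * x ^ 2) + (-z) := by ring
            rw [e1, Real.exp_add]
            ring
          rw [e2, integral_const_mul, integral_gaussian]
          have h2 : z ^ (-(1:ℝ)/2) = (Real.sqrt z)⁻¹ := by
            rw [Real.sqrt_eq_rpow, ← Real.rpow_neg hz.le]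
            norm_num
          have h3 : Real.sqrt (π / (1/z)) = Real.sqrt π * Real.sqrt z := by
            rw [← Real.sqrt_mul pi_pos.le]
            congr 1
            field_simp
          rw [h2, h3]
          have hs : Real.sqrt π ≠ 0 := by positivity
          have hsz : Real.sqrt z ≠ 0 := by positivity
          field_simp
        have hnormeq : ∀ x : ℝ, ‖F z x‖ = F z x := fun x => by
          rw [Real.norm_eq_abs, abs_of_nonneg (hFnn x)]
        simp only [Function.uncurry_apply_pair, hnormeq]
        rw [Real.norm_eq_abs, abs_of_nonneg (integral_nonneg (fun x => hFnn x))]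
        calc ∫ x in Iic y, F z x ≤ ∫ x : ℝ, F z x :=
              setIntegral_le_integral hIntz (Filter.Eventually.of_forall hFnn)
          _ = Real.exp (-z) := hval
  have step1 : ∀ z ∈ Ioi (0:ℝ),
      (∫ x in Iic y, (1 / Real.sqrt (π * z)) * Real.exp (-x ^ 2 / z)) * Real.exp (-z)
        = ∫ x in Iic y, F z x := by
    intro z hz
    simp only [mem_Ioi] at hz
    rw [← integral_mul_const]
    exact integral_congr_ae (Filter.Eventually.of_forall fun x => hFval z hz x)
  rw [setIntegral_congr_fun measurableSet_Ioi step1, integral_integral_swap hIntF]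
  apply setIntegral_congr_fun measurableSet_Iic
  intro x _
  simp only [hF]
  rw [integral_const_mul]
  exact part1 x

theorem gaussian_exponential_mixture_is_laplace :
    (∀ x : ℝ,
      (1 / Real.sqrt π) *
          ∫ z in Set.Ioi (0 : ℝ), z ^ (-(1 : ℝ) / 2) * Real.exp (-x ^ 2 / z - z)
        = Real.exp (-2 * |x|)) ∧
    (∀ y : ℝ,
      ∫ z in Set.Ioi (0 : ℝ),
          (∫ x in Set.Iic y, (1 / Real.sqrt (π * z)) * Real.exp (-x ^ 2 / z)) *
            Real.exp (-z)
        = ∫ x in Set.Iic y, Real.exp (-2 * |x|)) := by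
  exact ⟨part1, part2⟩
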